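/- arXiv:2011.13259 — 2 statements merged into one kernel-verified Lean document; each statement's English description precedes it below -/
import Mathlib

section
/- Let ψ(y) = max_{x∈ℝⁿ}{⟨Aᵀy, x⟩ − f(x)} be the dual function of the μ-strongly convex function f with linear operator A. If y^N satisfies ‖∇ψ(y^N)‖₂ ≤ ε/R_y and ‖y^N‖₂ ≤ 2R_y, where R_y = ‖y*‖₂ for a minimizer y* of ψ, then the primal point x^N = x(Aᵀy^N) = argmax_x{⟨Aᵀy^N, x⟩ − f(x)} satisfies f(x^N) − f(x*) ≤ 2ε and ‖Ax^N‖₂ ≤ ε/R_y, where x* is any minimizer of f over {x : Ax = 0}. -/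
open Matrix Finset

/-- Euclidean norm of a vector in `ℝ^m`. -/
noncomputable def enormR {m : ℕ} (x : Fin m → ℝ) : ℝ := Real.sqrt (∑ i, (x i) ^ 2)

open RealInnerProductSpace in
lemma dot_le_enorm {m : ℕ} (a b : Fin m → ℝ) : dotProduct a b ≤ enormR a * enormR b := by
  have h1 : ⟪((WithLp.equiv 2 (Fin m → ℝ)).symm a), ((WithLp.equiv 2 (Fin m → ℝ)).symm b)⟫ = dotProduct a b := by
    simp [EuclideanSpace.inner_eq_star_dotProduct, dotProduct, mul_comm]
  have h2 : ‖((WithLp.equiv 2 (Fin m → ℝ)).symm a)‖ = enormR a := by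
    rw [EuclideanSpace.norm_eq]; simp [enormR, sq_abs]
  have h3 : ‖((WithLp.equiv 2 (Fin m → ℝ)).symm b)‖ = enormR b := by
    rw [EuclideanSpace.norm_eq]; simp [enormR, sq_abs]
  calc dotProduct a b ≤ |dotProduct a b| := le_abs_self _
    _ ≤ enormR a * enormR b := by rw [← h1, ← h2, ← h3]; exact abs_real_inner_le_norm _ _

lemma enorm_nonneg' {m : ℕ} (x : Fin m → ℝ) : 0 ≤ enormR x := Real.sqrt_nonneg _

/-- If the dual iterate `y^N` has small dual gradient `‖∇ψ(y^N)‖₂ = ‖A x(Aᵀy^N)‖₂ ≤ ε/R_y`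
and `‖y^N‖₂ ≤ 2 R_y`, then the primal point `x^N = x(Aᵀ y^N)` is a good approximate
solution of `min_{Ax=0} f(x)`: `f(x^N) − f(x*) ≤ 2ε` and `‖A x^N‖₂ ≤ ε/R_y`. -/
theorem dual_gradient_certificate {n d : ℕ} (μ ε Ry : ℝ)
    (hμ : 0 < μ) (hε : 0 < ε) (hRy : 0 < Ry)
    (f : (Fin n → ℝ) → ℝ)
    (hsc : ∀ (x y : Fin n → ℝ) (a b : ℝ), 0 ≤ a → 0 ≤ b → a + b = 1 →
      f (a • x + b • y) ≤ a * f x + b * f y - μ / 2 * a * b * (enormR (x - y)) ^ 2)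
    (A : Matrix (Fin d) (Fin n) ℝ)
    (xmap : (Fin n → ℝ) → (Fin n → ℝ))
    (hxmap : ∀ z x, dotProduct z x - f x ≤ dotProduct z (xmap z) - f (xmap z))
    (ψ : (Fin d → ℝ) → ℝ)
    (hψ : ∀ y, ψ y = dotProduct (Aᵀ *ᵥ y) (xmap (Aᵀ *ᵥ y)) - f (xmap (Aᵀ *ᵥ y)))
    (ystar : Fin d → ℝ) (hystar : ∀ y, ψ ystar ≤ ψ y) (hRydef : enormR ystar = Ry)
    (yN : Fin d → ℝ)
    (hgrad : enormR (A *ᵥ xmap (Aᵀ *ᵥ yN)) ≤ ε / Ry)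
    (hyN : enormR yN ≤ 2 * Ry)
    (xstar : Fin n → ℝ) (hfeas : A *ᵥ xstar = 0)
    (hopt : ∀ x, A *ᵥ x = 0 → f xstar ≤ f x) :
    f (xmap (Aᵀ *ᵥ yN)) - f xstar ≤ 2 * ε ∧
    enormR (A *ᵥ xmap (Aᵀ *ᵥ yN)) ≤ ε / Ry := by
  refine ⟨?_, hgrad⟩
  set xN := xmap (Aᵀ *ᵥ yN) with hxN
  have hswap : ∀ x : Fin n → ℝ, dotProduct (Aᵀ *ᵥ yN) x = dotProduct yN (A *ᵥ x) := by
    intro x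
    rw [Matrix.mulVec_transpose, Matrix.dotProduct_mulVec]
  -- weak duality
  have hwd := hxmap (Aᵀ *ᵥ yN) xstar
  rw [hswap xstar, hfeas, hswap xN] at hwd
  simp only [dotProduct_zero, zero_sub] at hwd
  -- f xN - f xstar ≤ ⟨yN, A xN⟩
  have key : f xN - f xstar ≤ dotProduct yN (A *ᵥ xN) := by linarith
  have cs : dotProduct yN (A *ᵥ xN) ≤ enormR yN * enormR (A *ᵥ xN) := dot_le_enorm _ _
  have hb : enormR yN * enormR (A *ᵥ xN) ≤ (2 * Ry) * (ε / Ry) := by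
    apply mul_le_mul hyN hgrad (enorm_nonneg' _) (by positivity)
  have : (2 * Ry) * (ε / Ry) = 2 * ε := by field_simp
  linarith
end

section
/- For the two-point zeroth-order estimator f̃'_r(x,ξ,e) = (n/(2r))(f̃(x+re,ξ) − f̃(x−re,ξ)) e with f̃(x,ξ) = f(x,ξ) + Δ(x), |Δ(x)| ≤ Δ, the bias relative to the gradient of the smoothed function F(x) = 𝔼_e[f(x+re)] satisfies ‖𝔼[f̃'_r(x,ξ,e)] − ∇F(x)‖_* ≤ nΔ p_*/r, where p_* bounds ⁴√(𝔼[‖e‖_*⁴]). -/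
open MeasureTheory

section Aux
variable {n : ℕ}

lemma dnorm_zero' (dnorm : EuclideanSpace ℝ (Fin n) → ℝ)
    (hdsmul : ∀ (c : ℝ) x, dnorm (c • x) = |c| * dnorm x) : dnorm 0 = 0 := by
  have := hdsmul 0 0
  simpa using this

lemma coord_le_norm (v : EuclideanSpace ℝ (Fin n)) (i : Fin n) : |v i| ≤ ‖v‖ := by
  rw [EuclideanSpace.norm_eq, ← Real.sqrt_sq_eq_abs]
  apply Real.sqrt_le_sqrt
  have : |v i| ^ 2 ≤ ∑ j, ‖v j‖ ^ 2 := by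
    have := Finset.single_le_sum (f := fun j => ‖v j‖ ^ 2)
      (fun j _ => sq_nonneg _) (Finset.mem_univ i)
    simpa [Real.norm_eq_abs, sq_abs] using this
  simpa [sq_abs] using this

lemma dnorm_bound (dnorm : EuclideanSpace ℝ (Fin n) → ℝ)
    (hd0 : ∀ x, 0 ≤ dnorm x)
    (hdadd : ∀ x y, dnorm (x + y) ≤ dnorm x + dnorm y)
    (hdsmul : ∀ (c : ℝ) x, dnorm (c • x) = |c| * dnorm x) :
    ∃ C : ℝ, 0 ≤ C ∧ ∀ v, dnorm v ≤ C * ‖v‖ := by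
  classical
  set b : Fin n → EuclideanSpace ℝ (Fin n) := fun i => EuclideanSpace.single i (1:ℝ) with hb
  refine ⟨∑ i, dnorm (b i), Finset.sum_nonneg fun i _ => hd0 _, fun v => ?_⟩
  have hv : v = ∑ i, v i • b i := by
    have := (EuclideanSpace.basisFun (Fin n) ℝ).sum_repr v
    simp only [EuclideanSpace.basisFun_repr, EuclideanSpace.basisFun_apply] at this
    rw [hb]; exact this.symm
  calc dnorm v = dnorm (∑ i, v i • b i) := by rw [← hv]
    _ ≤ ∑ i, dnorm (v i • b i) :=
        Finset.le_sum_of_subadditive dnorm (dnorm_zero' dnorm hdsmul).le hdadd _ _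
    _ = ∑ i, |v i| * dnorm (b i) := by simp [hdsmul]
    _ ≤ ∑ i, ‖v‖ * dnorm (b i) := by
        refine Finset.sum_le_sum fun i _ => ?_
        exact mul_le_mul_of_nonneg_right (coord_le_norm v i) (hd0 _)
    _ = (∑ i, dnorm (b i)) * ‖v‖ := by rw [← Finset.mul_sum, mul_comm]

lemma dnorm_continuous (dnorm : EuclideanSpace ℝ (Fin n) → ℝ)
    (hd0 : ∀ x, 0 ≤ dnorm x)
    (hdadd : ∀ x y, dnorm (x + y) ≤ dnorm x + dnorm y)
    (hdsmul : ∀ (c : ℝ) x, dnorm (c • x) = |c| * dnorm x) :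
    Continuous dnorm := by
  obtain ⟨C, hC0, hC⟩ := dnorm_bound dnorm hd0 hdadd hdsmul
  have key : ∀ a b : EuclideanSpace ℝ (Fin n), dnorm a - dnorm b ≤ C * ‖a - b‖ := by
    intro a b
    have h1 : dnorm a ≤ dnorm b + dnorm (a - b) := by
      have := hdadd b (a - b); simpa using this
    have := hC (a - b)
    linarith
  have : LipschitzWith (Real.toNNReal C) dnorm := by
    apply LipschitzWith.of_dist_le_mul
    intro a b
    rw [Real.dist_eq, Real.coe_toNNReal C hC0, dist_eq_norm]
    rw [abs_sub_le_iff]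
    constructor
    · exact key a b
    · rw [norm_sub_rev]
      exact key b a
  exact this.continuous


lemma dnorm_convexOn (dnorm : EuclideanSpace ℝ (Fin n) → ℝ)
    (hdadd : ∀ x y, dnorm (x + y) ≤ dnorm x + dnorm y)
    (hdsmul : ∀ (c : ℝ) x, dnorm (c • x) = |c| * dnorm x) :
    ConvexOn ℝ Set.univ dnorm := by
  refine ⟨convex_univ, fun x _ y _ a b ha hb hab => ?_⟩
  calc dnorm (a • x + b • y) ≤ dnorm (a • x) + dnorm (b • y) := hdadd _ _
    _ = a * dnorm x + b * dnorm y := by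
        rw [hdsmul, hdsmul, abs_of_nonneg ha, abs_of_nonneg hb]
    _ = a • dnorm x + b • dnorm y := rfl

lemma dnorm_integral_le {Ω : Type*} [MeasurableSpace Ω] (ℙ : Measure Ω)
    [IsProbabilityMeasure ℙ]
    (dnorm : EuclideanSpace ℝ (Fin n) → ℝ)
    (hd0 : ∀ x, 0 ≤ dnorm x)
    (hdadd : ∀ x y, dnorm (x + y) ≤ dnorm x + dnorm y)
    (hdsmul : ∀ (c : ℝ) x, dnorm (c • x) = |c| * dnorm x)
    (g : Ω → EuclideanSpace ℝ (Fin n)) (hg : Integrable g ℙ)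
    (hdg : Integrable (fun ω => dnorm (g ω)) ℙ) :
    dnorm (∫ ω, g ω ∂ℙ) ≤ ∫ ω, dnorm (g ω) ∂ℙ :=
  (dnorm_convexOn dnorm hdadd hdsmul).map_integral_le
    (dnorm_continuous dnorm hd0 hdadd hdsmul).continuousOn isClosed_univ
    (Filter.Eventually.of_forall fun _ => Set.mem_univ _) hg hdg

end Aux

/-- Bias of the two-point zeroth-order estimator
`f̃'_r(x,ξ,e) = (n/(2r))(f̃(x+re,ξ) − f̃(x−re,ξ)) e` (where `f̃(z,ξ) = f(z,ξ) + Δ(z)` with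
`|Δ(z)| ≤ Δ`) relative to the gradient `∇F(x) = 𝔼_e[(n/r) f(x+re) e]` of the smoothed
function: `‖𝔼[f̃'_r(x,ξ,e)] − ∇F(x)‖_* ≤ n Δ p_*/r`, where `(𝔼‖e‖_*⁴)^{1/4} ≤ p_*`. -/
theorem two_point_estimator_bias {n : ℕ} {Ω : Type*} [MeasurableSpace Ω]
    (ℙ : Measure Ω) [IsProbabilityMeasure ℙ]
    (e : Ω → EuclideanSpace ℝ (Fin n))
    (he : ∀ᵐ ω ∂ℙ, ‖e ω‖ = 1)
    (r Δ pstar : ℝ) (hr : 0 < r) (hΔ : 0 ≤ Δ) (hp : 0 ≤ pstar)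
    -- the dual norm ‖·‖_* of the chosen norm ‖·‖
    (dnorm : EuclideanSpace ℝ (Fin n) → ℝ)
    (hd0 : ∀ x, 0 ≤ dnorm x)
    (hdadd : ∀ x y, dnorm (x + y) ≤ dnorm x + dnorm y)
    (hdsmul : ∀ (c : ℝ) x, dnorm (c • x) = |c| * dnorm x)
    (hpstar : ∫ ω, (dnorm (e ω)) ^ 4 ∂ℙ ≤ pstar ^ 4)
    (f : EuclideanSpace ℝ (Fin n) → ℝ)
    (fξ : EuclideanSpace ℝ (Fin n) → Ω → ℝ)   -- stochastic realizations f(z,ξ)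
    (hmean : ∀ z, ∫ ω, fξ z ω ∂ℙ = f z)
    (Δfun : EuclideanSpace ℝ (Fin n) → ℝ) (hΔfun : ∀ z, |Δfun z| ≤ Δ)
    (x : EuclideanSpace ℝ (Fin n))
    -- the noise ξ is independent of e and unbiased
    (hnoise : ∀ c : ℝ, ∫ ω, (fξ (x + c • e ω) ω) • e ω ∂ℙ =
      ∫ ω, (f (x + c • e ω)) • e ω ∂ℙ)
    -- the direction e is symmetrically distributed
    (hsym : ∫ ω, (f (x - r • e ω)) • e ω ∂ℙ = - ∫ ω, (f (x + r • e ω)) • e ω ∂ℙ)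
    (est : Ω → EuclideanSpace ℝ (Fin n))
    (hest : ∀ ω, est ω = ((n : ℝ) / (2 * r) *
      ((fξ (x + r • e ω) ω + Δfun (x + r • e ω)) -
       (fξ (x - r • e ω) ω + Δfun (x - r • e ω)))) • e ω)
    (gradF : EuclideanSpace ℝ (Fin n))
    (hgradF : gradF = ∫ ω, ((n : ℝ) / r * f (x + r • e ω)) • e ω ∂ℙ)
    (hint_est : Integrable est ℙ)
    (hint_f : ∀ c : ℝ, Integrable (fun ω => (f (x + c • e ω)) • e ω) ℙ)
    (hint_fξ : ∀ c : ℝ, Integrable (fun ω => (fξ (x + c • e ω) ω) • e ω) ℙ)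
    (hint_Δ : ∀ c : ℝ, Integrable (fun ω => (Δfun (x + c • e ω)) • e ω) ℙ)
    (hint_d : Integrable (fun ω => dnorm (e ω)) ℙ) :
    dnorm ((∫ ω, est ω ∂ℙ) - gradF) ≤ n * Δ * pstar / r := by
  obtain ⟨C, hC0, hC⟩ := dnorm_bound dnorm hd0 hdadd hdsmul
  have hcont := dnorm_continuous dnorm hd0 hdadd hdsmul
  set c : ℝ := (n : ℝ) / (2 * r) with hc
  have hc0 : 0 ≤ c := by positivity
  have hsubeq : ∀ ω, x - r • e ω = x + (-r) • e ω := by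
    intro ω; rw [neg_smul, ← sub_eq_add_neg]
  have hP := hint_fξ r
  have hQ : Integrable (fun ω => (fξ (x - r • e ω) ω) • e ω) ℙ := by
    have := hint_fξ (-r); simp only [← hsubeq] at this; exact this
  have hA := hint_Δ r
  have hB : Integrable (fun ω => (Δfun (x - r • e ω)) • e ω) ℙ := by
    have := hint_Δ (-r); simp only [← hsubeq] at this; exact this
  -- rewrite the estimator
  have hest' : est = fun ω => c • ((fξ (x + r • e ω) ω) • e ω + (Δfun (x + r • e ω)) • e ω
      - ((fξ (x - r • e ω) ω) • e ω + (Δfun (x - r • e ω)) • e ω)) := by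
    funext ω
    rw [hest ω, mul_smul, sub_smul, add_smul, add_smul]
  have hIQ : ∫ ω, (fξ (x - r • e ω) ω) • e ω ∂ℙ
      = - ∫ ω, (f (x + r • e ω)) • e ω ∂ℙ := by
    rw [← hsym]
    have h1 := hnoise (-r)
    simp only [← hsubeq] at h1
    exact h1
  have hIP := hnoise r
  set Iplus := ∫ ω, (f (x + r • e ω)) • e ω ∂ℙ with hIplus
  set IA := ∫ ω, (Δfun (x + r • e ω)) • e ω ∂ℙ with hIA
  set IB := ∫ ω, (Δfun (x - r • e ω)) • e ω ∂ℙ with hIB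
  have hintest : ∫ ω, est ω ∂ℙ = c • (Iplus + IA - (-Iplus + IB)) := by
    have hPA : Integrable (fun ω => (fξ (x + r • e ω) ω) • e ω
        + (Δfun (x + r • e ω)) • e ω) ℙ := hP.add hA
    have hQB : Integrable (fun ω => (fξ (x - r • e ω) ω) • e ω
        + (Δfun (x - r • e ω)) • e ω) ℙ := hQ.add hB
    rw [hest', integral_smul, integral_sub hPA hQB,
      integral_add hP hA, integral_add hQ hB, hIP, hIQ]
  have hgrad : gradF = ((n : ℝ) / r) • Iplus := by
    rw [hgradF, hIplus]
    simp_rw [mul_smul]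
    rw [integral_smul]
  have h2c : (n : ℝ) / r = 2 * c := by
    rw [hc]; field_simp
  have hkey : (∫ ω, est ω ∂ℙ) - gradF = c • (IA - IB) := by
    rw [hintest, hgrad, h2c]
    module
  -- a.e. bound on dnorm (e ω)
  have heC : ∀ᵐ ω ∂ℙ, dnorm (e ω) ≤ C := by
    filter_upwards [he] with ω hω
    have := hC (e ω); rw [hω, mul_one] at this; exact this
  -- bound dnorm of the Δ-integrals
  have hbound : ∀ (g : Ω → EuclideanSpace ℝ (Fin n)), Integrable g ℙ →
      (∀ ω, ∃ z, g ω = (Δfun z) • e ω) →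
      dnorm (∫ ω, g ω ∂ℙ) ≤ Δ * ∫ ω, dnorm (e ω) ∂ℙ := by
    intro g hg hform
    have hdg : Integrable (fun ω => dnorm (g ω)) ℙ := by
      refine (integrable_const (Δ * C)).mono'
        (hcont.comp_aestronglyMeasurable hg.aestronglyMeasurable) ?_
      filter_upwards [heC] with ω hω
      obtain ⟨z, hz⟩ := hform ω
      rw [Real.norm_eq_abs, abs_of_nonneg (hd0 _), hz, hdsmul]
      exact mul_le_mul (hΔfun z) hω (hd0 _) hΔ
    calc dnorm (∫ ω, g ω ∂ℙ)
        ≤ ∫ ω, dnorm (g ω) ∂ℙ :=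
          dnorm_integral_le ℙ dnorm hd0 hdadd hdsmul g hg hdg
      _ ≤ ∫ ω, Δ * dnorm (e ω) ∂ℙ := by
          refine integral_mono hdg (hint_d.const_mul Δ) fun ω => ?_
          obtain ⟨z, hz⟩ := hform ω
          rw [hz, hdsmul]
          exact mul_le_mul_of_nonneg_right (hΔfun z) (hd0 _)
      _ = Δ * ∫ ω, dnorm (e ω) ∂ℙ := integral_const_mul Δ _
  have hIAb : dnorm IA ≤ Δ * ∫ ω, dnorm (e ω) ∂ℙ :=
    hbound _ hA fun ω => ⟨x + r • e ω, rfl⟩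
  have hIBb : dnorm IB ≤ Δ * ∫ ω, dnorm (e ω) ∂ℙ :=
    hbound _ hB fun ω => ⟨x - r • e ω, rfl⟩
  -- ∫ dnorm(e) ≤ pstar via Jensen
  have hd4 : Integrable (fun ω => dnorm (e ω) ^ 4) ℙ := by
    have hm := hint_d.aestronglyMeasurable
    refine (integrable_const (C ^ 4)).mono' ?_ ?_
    · simp_rw [show ∀ t : ℝ, t ^ 4 = t * t * (t * t) by intro t; ring]
      exact (hm.mul hm).mul (hm.mul hm)
    · filter_upwards [heC] with ω hω
      rw [Real.norm_eq_abs, abs_of_nonneg (by positivity)]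
      exact pow_le_pow_left₀ (hd0 _) hω 4
  have hjensen : (∫ ω, dnorm (e ω) ∂ℙ) ^ 4 ≤ ∫ ω, dnorm (e ω) ^ 4 ∂ℙ :=
    (Even.convexOn_pow (by decide : Even 4)).map_integral_le
      (continuous_pow 4).continuousOn isClosed_univ
      (Filter.Eventually.of_forall fun _ => Set.mem_univ _) hint_d hd4
  have hE0 : 0 ≤ ∫ ω, dnorm (e ω) ∂ℙ := integral_nonneg fun ω => hd0 _
  have hE : ∫ ω, dnorm (e ω) ∂ℙ ≤ pstar :=
    le_of_pow_le_pow_left₀ (by norm_num) hp (hjensen.trans hpstar)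
  -- conclude
  rw [hkey, hdsmul, abs_of_nonneg hc0]
  have hneg : dnorm (-IB) = dnorm IB := by
    rw [← neg_one_smul ℝ IB, hdsmul]; simp
  have h3 : dnorm (IA - IB) ≤ dnorm IA + dnorm IB := by
    rw [sub_eq_add_neg]
    exact (hdadd IA (-IB)).trans (by rw [hneg])
  have h4 : dnorm IA + dnorm IB ≤ Δ * pstar + Δ * pstar := by
    have := mul_le_mul_of_nonneg_left hE hΔ
    exact add_le_add (hIAb.trans this) (hIBb.trans this)
  calc c * dnorm (IA - IB) ≤ c * (Δ * pstar + Δ * pstar) :=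
        mul_le_mul_of_nonneg_left (h3.trans h4) hc0
    _ = n * Δ * pstar / r := by rw [hc]; field_simp; ring
end
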